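/- For all integers k, m ≥ 1 and every positive integer n there exists a sequence Σ = (a_1, …, a_n) of elements of ℤ^k with every coordinate of every a_i lying in [0, m·4^{n/k}], such that e^m_Σ(A₁) ≠ e^m_Σ(A₂) for all distinct subsets A₁, A₂ ⊆ {1, …, n} with |A₁|, |A₂| ≥ m. -/

import Mathlib

open Finset in
private lemma esplit13 {n : ℕ} (x : Fin n → ℤ) (A : Finset (Fin n)) (i0 : Fin n) (h : i0 ∈ A) (m : ℕ) :
    ∑ S ∈ A.powersetCard (m+1), ∏ i ∈ S, x i =
    x i0 * (∑ S ∈ (A.erase i0).powersetCard m, ∏ i ∈ S, x i)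
      + ∑ S ∈ (A.erase i0).powersetCard (m+1), ∏ i ∈ S, x i := by
  conv_lhs => rw [← insert_erase h]
  rw [powersetCard_succ_insert (notMem_erase _ _)]
  rw [sum_union]
  · rw [add_comm, mul_sum]
    congr 1
    rw [sum_image]
    · refine sum_congr rfl fun S hS => ?_
      rw [mem_powersetCard] at hS
      rw [prod_insert (fun hi => (mem_erase.1 (hS.1 hi)).1 rfl)]
    · intro S hS S' hS' hSS'
      rw [mem_coe, mem_powersetCard] at hS hS'
      have h1 : i0 ∉ S := fun hi => (mem_erase.1 (hS.1 hi)).1 rfl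
      have h2 : i0 ∉ S' := fun hi => (mem_erase.1 (hS'.1 hi)).1 rfl
      rw [← erase_insert h1, ← erase_insert h2, hSS']
  · rw [disjoint_left]
    intro S hS hS'
    rw [mem_powersetCard] at hS
    rcases Finset.mem_image.1 hS' with ⟨S', _, rfl⟩
    exact (mem_erase.1 (hS.1 (mem_insert_self _ _))).1 rfl

open Finset in
private lemma eqOff13 {n t : ℕ} {g g' : Fin n → Fin (t+1)} {i0 : Fin n}
    (h : ∀ j, j ≠ i0 → g j = g' j) (C : Finset (Fin n)) (hC : i0 ∉ C) (s : ℕ) :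
    ∑ S ∈ C.powersetCard s, ∏ i ∈ S, ((g i : ℕ) : ℤ) =
    ∑ S ∈ C.powersetCard s, ∏ i ∈ S, ((g' i : ℕ) : ℤ) := by
  refine sum_congr rfl fun S hS => prod_congr rfl fun i hi => ?_
  rw [mem_powersetCard] at hS
  have : i ≠ i0 := fun he => hC (he ▸ hS.1 hi)
  rw [h i this]

open Finset in
private lemma cardZeroAt13 (n q : ℕ) (i : Fin n) :
    (univ.filter fun g : Fin n → Fin (q+1) => g i = 0).card = (q+1)^(n-1) := by
  classical
  have : (univ.filter fun g : Fin n → Fin (q+1) => g i = 0) =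
      Fintype.piFinset (fun j => if j = i then ({0} : Finset (Fin (q+1))) else univ) := by
    ext g
    simp only [mem_filter, mem_univ, true_and, Fintype.mem_piFinset]
    constructor
    · intro hg j
      by_cases hj : j = i
      · subst hj; simp [hg]
      · simp [hj]
    · intro hg
      have := hg i
      simpa using this
  rw [this, Fintype.card_piFinset]
  have : ∀ j : Fin n, (if j = i then ({0} : Finset (Fin (q+1))) else univ).card
      = if j = i then 1 else (q+1) := by
    intro j; split <;> simp
  simp_rw [this]
  rw [prod_ite]
  simp only [prod_const, filter_eq', mem_univ, if_true, card_singleton, one_pow, one_mul]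
  congr 1
  rw [filter_ne', card_erase_of_mem (mem_univ i), card_univ, Fintype.card_fin]

open Finset in
private lemma colCountAux13 (n m q : ℕ) (A B : Finset (Fin n))
    (hA : m+1 ≤ A.card)
    (i0 : Fin n) (hiA : i0 ∈ A) (hiB : i0 ∉ B) :
    (univ.filter fun g : Fin n → Fin (q+1) =>
      (∑ S ∈ A.powersetCard (m+1), ∏ i ∈ S, ((g i : ℕ) : ℤ)) =
      ∑ S ∈ B.powersetCard (m+1), ∏ i ∈ S, ((g i : ℕ) : ℤ)).card ≤ (m+1) * (q+1)^(n-1) := by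
  classical
  set A' := A.erase i0 with hA'
  have hiA' : i0 ∉ A' := notMem_erase _ _
  have hcard : m ≤ A'.card := by
    rw [hA', card_erase_of_mem hiA]; omega
  obtain ⟨T, hT, hTc⟩ := exists_subset_card_eq hcard
  have hiT : i0 ∉ T := fun h => hiA' (hT h)
  set U1 : Finset (Fin n → Fin (q+1)) :=
    T.biUnion (fun i => univ.filter fun g => g i = 0) with hU1
  set U2 : Finset (Fin n → Fin (q+1)) :=
    univ.filter (fun g => (∀ i ∈ T, g i ≠ 0) ∧
      (∑ S ∈ A.powersetCard (m+1), ∏ i ∈ S, ((g i : ℕ) : ℤ)) =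
      ∑ S ∈ B.powersetCard (m+1), ∏ i ∈ S, ((g i : ℕ) : ℤ)) with hU2
  have hsub : (univ.filter fun g : Fin n → Fin (q+1) =>
      (∑ S ∈ A.powersetCard (m+1), ∏ i ∈ S, ((g i : ℕ) : ℤ)) =
      ∑ S ∈ B.powersetCard (m+1), ∏ i ∈ S, ((g i : ℕ) : ℤ)) ⊆ U1 ∪ U2 := by
    intro g hg
    rw [mem_filter] at hg
    by_cases hz : ∀ i ∈ T, g i ≠ 0
    · exact mem_union_right _ (mem_filter.2 ⟨mem_univ _, hz, hg.2⟩)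
    · push_neg at hz
      obtain ⟨i, hi, hgi⟩ := hz
      exact mem_union_left _ (mem_biUnion.2 ⟨i, hi, mem_filter.2 ⟨mem_univ _, hgi⟩⟩)
  have hU1card : U1.card ≤ m * (q+1)^(n-1) := by
    refine le_trans (card_biUnion_le) ?_
    rw [← hTc]
    refine le_trans (sum_le_sum fun i _ => le_of_eq (cardZeroAt13 n q i)) ?_
    rw [sum_const, smul_eq_mul]
  have hU2card : U2.card ≤ (q+1)^(n-1) := by
    rw [← cardZeroAt13 n q i0]
    refine card_le_card_of_injOn (fun g => Function.update g i0 0) ?_ ?_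
    · intro g _
      exact mem_filter.2 ⟨mem_univ _, by simp⟩
    · intro g hg g' hg' hgg'
      simp only [hU2, mem_coe, mem_filter, mem_univ, true_and] at hg hg'
      have hoff : ∀ j, j ≠ i0 → g j = g' j := by
        intro j hj
        have := congrFun hgg' j
        simpa [Function.update_of_ne hj] using this
      have hB' : (∑ S ∈ B.powersetCard (m+1), ∏ i ∈ S, ((g i : ℕ) : ℤ)) =
          ∑ S ∈ B.powersetCard (m+1), ∏ i ∈ S, ((g' i : ℕ) : ℤ) := eqOff13 hoff B hiB _
      have hPg : (∑ S ∈ A'.powersetCard m, ∏ i ∈ S, ((g i : ℕ) : ℤ)) =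
          ∑ S ∈ A'.powersetCard m, ∏ i ∈ S, ((g' i : ℕ) : ℤ) := eqOff13 hoff A' hiA' _
      have hQg : (∑ S ∈ A'.powersetCard (m+1), ∏ i ∈ S, ((g i : ℕ) : ℤ)) =
          ∑ S ∈ A'.powersetCard (m+1), ∏ i ∈ S, ((g' i : ℕ) : ℤ) := eqOff13 hoff A' hiA' _
      have hsg := esplit13 (fun i => ((g i : ℕ) : ℤ)) A i0 hiA m
      have hsg' := esplit13 (fun i => ((g' i : ℕ) : ℤ)) A i0 hiA m
      have hPpos : (1:ℤ) ≤ ∑ S ∈ A'.powersetCard m, ∏ i ∈ S, ((g i : ℕ) : ℤ) := by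
        have hTm : T ∈ A'.powersetCard m := mem_powersetCard.2 ⟨hT, hTc⟩
        have h0 : ∀ i ∈ T, (0:ℤ) < ((g i : ℕ) : ℤ) := by
          intro i hi
          have h2 := hg.1 i hi
          have h3 : (g i : ℕ) ≠ 0 := fun hc => h2 (Fin.ext (by simpa using hc))
          exact_mod_cast Nat.pos_of_ne_zero h3
        have h1 : (1:ℤ) ≤ ∏ i ∈ T, ((g i : ℕ) : ℤ) := by
          have := Finset.prod_pos h0
          omega
        refine le_trans h1 (single_le_sum (f := fun S => ∏ i ∈ S, ((g i : ℕ) : ℤ))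
          (fun S _ => prod_nonneg fun i _ => by positivity) hTm)
      have heq : ((g i0 : ℕ) : ℤ) * (∑ S ∈ A'.powersetCard m, ∏ i ∈ S, ((g i : ℕ) : ℤ)) =
          ((g' i0 : ℕ) : ℤ) * (∑ S ∈ A'.powersetCard m, ∏ i ∈ S, ((g i : ℕ) : ℤ)) := by
        have e1 : ((g i0 : ℕ) : ℤ) * (∑ S ∈ A'.powersetCard m, ∏ i ∈ S, ((g i : ℕ) : ℤ))
            + ∑ S ∈ A'.powersetCard (m+1), ∏ i ∈ S, ((g i : ℕ) : ℤ)
            = ((g' i0 : ℕ) : ℤ) * (∑ S ∈ A'.powersetCard m, ∏ i ∈ S, ((g' i : ℕ) : ℤ))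
            + ∑ S ∈ A'.powersetCard (m+1), ∏ i ∈ S, ((g' i : ℕ) : ℤ) := by
          rw [← hsg, ← hsg', hg.2, hg'.2, hB']
        rw [← hPg, ← hQg] at e1
        exact by linarith
      have hval : ((g i0 : ℕ) : ℤ) = ((g' i0 : ℕ) : ℤ) :=
        mul_right_cancel₀ (by linarith) heq
      have : g i0 = g' i0 := by
        have : (g i0 : ℕ) = (g' i0 : ℕ) := by exact_mod_cast hval
        exact Fin.val_injective this
      funext j
      by_cases hj : j = i0
      · subst hj; exact this
      · exact hoff j hj
  calc _ ≤ (U1 ∪ U2).card := card_le_card hsub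
    _ ≤ U1.card + U2.card := card_union_le _ _
    _ ≤ m * (q+1)^(n-1) + (q+1)^(n-1) := Nat.add_le_add hU1card hU2card
    _ = (m+1) * (q+1)^(n-1) := by ring

open Finset in
private lemma colCount13 (n m q : ℕ) (A B : Finset (Fin n)) (hA : m+1 ≤ A.card)
    (hB : m+1 ≤ B.card) (hAB : A ≠ B) :
    (univ.filter fun g : Fin n → Fin (q+1) =>
      (∑ S ∈ A.powersetCard (m+1), ∏ i ∈ S, ((g i : ℕ) : ℤ)) =
      ∑ S ∈ B.powersetCard (m+1), ∏ i ∈ S, ((g i : ℕ) : ℤ)).card ≤ (m+1) * (q+1)^(n-1) := by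
  by_cases h : ∃ i0, i0 ∈ A ∧ i0 ∉ B
  · obtain ⟨i0, h1, h2⟩ := h
    exact colCountAux13 n m q A B hA i0 h1 h2
  · push_neg at h
    obtain ⟨i0, hiB, hiA⟩ : ∃ i0, i0 ∈ B ∧ i0 ∉ A := by
      by_contra hc
      push_neg at hc
      exact hAB (subset_antisymm h hc)
    have h2 := colCountAux13 n m q B A hB i0 hiB hiA
    have hfe : (univ.filter fun g : Fin n → Fin (q+1) =>
        (∑ S ∈ A.powersetCard (m+1), ∏ i ∈ S, ((g i : ℕ) : ℤ)) =
        ∑ S ∈ B.powersetCard (m+1), ∏ i ∈ S, ((g i : ℕ) : ℤ)) =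
        (univ.filter fun g : Fin n → Fin (q+1) =>
        (∑ S ∈ B.powersetCard (m+1), ∏ i ∈ S, ((g i : ℕ) : ℤ)) =
        ∑ S ∈ A.powersetCard (m+1), ∏ i ∈ S, ((g i : ℕ) : ℤ)) := by
      apply filter_congr
      intro g _
      exact eq_comm
    rw [hfe]
    exact h2

open Finset in
private lemma colPower13 (n k q : ℕ) (D : Finset (Fin n → Fin q))
    [DecidablePred fun b : Fin n → Fin k → Fin q => ∀ j, (fun i => b i j) ∈ D] :
    (univ.filter fun b : Fin n → Fin k → Fin q => ∀ j, (fun i => b i j) ∈ D).card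
      = D.card ^ k := by
  classical
  have hcard : (Fintype.piFinset fun _ : Fin k => D).card = D.card ^ k := by
    rw [Fintype.card_piFinset]
    simp
  rw [← hcard]
  apply card_bij (fun b _ => Function.swap b)
  · intro b hb
    rw [mem_filter] at hb
    rw [Fintype.mem_piFinset]
    intro j
    exact hb.2 j
  · intro b hb b' hb' he
    funext i j
    exact congrFun (congrFun he j) i
  · intro h hh
    refine ⟨Function.swap h, ?_, rfl⟩
    rw [mem_filter]
    rw [Fintype.mem_piFinset] at hh
    exact ⟨mem_univ _, fun j => hh j⟩

/-- The `m`-th evaluation of the sequence `a` in `ℤ^k` on the subset `A`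
(componentwise products); it is `0` when `|A| < m`. -/
def mthEvalVec (n k m : ℕ) (a : Fin n → Fin k → ℤ) (A : Finset (Fin n)) : Fin k → ℤ :=
  fun j => ∑ S ∈ A.powersetCard m, ∏ i ∈ S, a i j

open Finset in
theorem stmt13 (k m : ℕ) (hk : 1 ≤ k) (hm : 1 ≤ m) (n : ℕ) (hn : 0 < n) :
    ∃ a : Fin n → Fin k → ℤ,
      (∀ i j, 0 ≤ a i j ∧ (a i j : ℝ) ≤ (m : ℝ) * (4 : ℝ) ^ ((n : ℝ) / k)) ∧
      (∀ A₁ A₂ : Finset (Fin n), A₁ ≠ A₂ → m ≤ A₁.card → m ≤ A₂.card →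
        mthEvalVec n k m a A₁ ≠ mthEvalVec n k m a A₂) := by
  classical
  set x : ℝ := (m : ℝ) * (4 : ℝ) ^ ((n : ℝ) / k) with hxdef
  have hx0 : 0 ≤ x := by positivity
  set M := ⌊x⌋₊ with hMdef
  -- key numeric inequality
  have hkey : 4 ^ n * m ^ k < (M + 1) ^ k := by
    have h1 : x < (M : ℝ) + 1 := Nat.lt_floor_add_one x
    have h2 : x ^ k < ((M : ℝ) + 1) ^ k := by
      apply pow_lt_pow_left₀ h1 hx0 (by omega)
    have h3 : x ^ k = (4 : ℝ) ^ n * (m : ℝ) ^ k := by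
      rw [hxdef, mul_pow]
      have h4 : ((4 : ℝ) ^ ((n : ℝ) / k)) ^ k = (4 : ℝ) ^ n := by
        rw [← Real.rpow_natCast ((4 : ℝ) ^ ((n : ℝ) / k)) k,
          ← Real.rpow_mul (by norm_num : (0:ℝ) ≤ 4),
          div_mul_cancel₀ (n : ℝ) (by exact_mod_cast (by omega : k ≠ 0) : (k : ℝ) ≠ 0),
          Real.rpow_natCast]
      rw [h4]; ring
    rw [h3] at h2
    have h5 : ((4 ^ n * m ^ k : ℕ) : ℝ) < (((M + 1) ^ k : ℕ) : ℝ) := by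
      push_cast
      exact h2
    exact_mod_cast h5
  -- the bad set and its bound
  obtain ⟨m', rfl⟩ : ∃ m', m = m' + 1 := ⟨m - 1, by omega⟩
  set m := m' + 1 with hm'
  set V := Fin n → Fin k → Fin (M + 1) with hV
  set av : V → Fin n → Fin k → ℤ := fun b i j => ((b i j : ℕ) : ℤ) with hav
  set Bad : Finset V := univ.filter fun b =>
    ¬ (∀ A₁ A₂ : Finset (Fin n), A₁ ≠ A₂ → m ≤ A₁.card → m ≤ A₂.card →
      mthEvalVec n k m (av b) A₁ ≠ mthEvalVec n k m (av b) A₂) with hBad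
  set P : Finset (Finset (Fin n) × Finset (Fin n)) :=
    univ.filter fun p => p.1 ≠ p.2 ∧ m ≤ p.1.card ∧ m ≤ p.2.card with hP
  set sBad : Finset (Fin n) → Finset (Fin n) → Finset (Fin n → Fin (M+1)) := fun A B =>
    univ.filter fun g => (∑ S ∈ A.powersetCard m, ∏ i ∈ S, ((g i : ℕ) : ℤ)) =
      ∑ S ∈ B.powersetCard m, ∏ i ∈ S, ((g i : ℕ) : ℤ) with hsBad
  have hsubset : Bad ⊆ P.biUnion fun p =>
      univ.filter fun b : V => ∀ j, (fun i => b i j) ∈ sBad p.1 p.2 := by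
    intro b hb
    rw [hBad, mem_filter] at hb
    push_neg at hb
    obtain ⟨-, A₁, A₂, hne, h1, h2, heval⟩ := hb
    rw [mem_biUnion]
    refine ⟨(A₁, A₂), by simp [hP, hne, h1, h2], ?_⟩
    rw [mem_filter]
    refine ⟨mem_univ _, fun j => ?_⟩
    rw [hsBad]
    simp only [mem_filter, mem_univ, true_and]
    exact congrFun heval j
  have hpair : ∀ p ∈ P,
      (univ.filter fun b : V => ∀ j, (fun i => b i j) ∈ sBad p.1 p.2).card
        ≤ (m * (M+1)^(n-1))^k := by
    intro p hp
    rw [hP, mem_filter] at hp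
    obtain ⟨-, hne, h1, h2⟩ := hp
    rw [colPower13]
    refine Nat.pow_le_pow_left ?_ k
    exact colCount13 n m' M p.1 p.2 h1 h2 hne
  have hPcard : P.card ≤ 4 ^ n := by
    refine le_trans (card_le_card (filter_subset _ _)) ?_
    rw [card_univ]
    simp only [Fintype.card_prod, Fintype.card_finset, Fintype.card_fin]
    rw [← mul_pow]
    norm_num
  have hBadcard : Bad.card < Fintype.card V := by
    have hb1 : Bad.card ≤ P.card * (m * (M+1)^(n-1))^k := by
      refine le_trans (card_le_card hsubset) ?_
      refine le_trans (card_biUnion_le) ?_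
      refine le_trans (sum_le_sum hpair) ?_
      rw [sum_const, smul_eq_mul]
    have hb2 : P.card * (m * (M+1)^(n-1))^k ≤ 4^n * (m * (M+1)^(n-1))^k :=
      Nat.mul_le_mul_right _ hPcard
    have hb3 : 4^n * (m * (M+1)^(n-1))^k < (M+1)^(k*n) := by
      have e1 : 4^n * (m * (M+1)^(n-1))^k = (4^n * m^k) * ((M+1)^((n-1)*k)) := by
        rw [mul_pow, ← pow_mul]; ring
      have e2 : (M+1)^(k*n) = (M+1)^k * (M+1)^((n-1)*k) := by
        rw [← pow_add]
        congr 1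
        have : n - 1 + 1 = n := by omega
        calc k * n = k * (n - 1 + 1) := by rw [this]
          _ = k + (n-1)*k := by ring
      rw [e1, e2]
      refine Nat.mul_lt_mul_of_lt_of_le hkey (le_refl _) ?_
      positivity
    have hcV : Fintype.card V = (M+1)^(k*n) := by
      have hrfl : Fintype.card V = Fintype.card (Fin n → Fin k → Fin (M + 1)) := rfl
      rw [hrfl, Fintype.card_fun, Fintype.card_fun, Fintype.card_fin, Fintype.card_fin,
        ← pow_mul, Fintype.card_fin, mul_comm]
    omega
  obtain ⟨b, hb⟩ : ∃ b : V, b ∉ Bad := by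
    by_contra hc
    push_neg at hc
    have h1 : (univ : Finset V) ⊆ Bad := fun b _ => hc b
    have h2 := card_le_card h1
    rw [card_univ] at h2
    omega
  refine ⟨av b, ?_, ?_⟩
  · intro i j
    constructor
    · exact Int.natCast_nonneg _
    · have h1 : ((b i j : ℕ) : ℝ) ≤ (M : ℝ) := by
        exact_mod_cast Fin.is_le (b i j)
      have h2 : (M : ℝ) ≤ x := Nat.floor_le hx0
      have h3 : ((av b i j : ℤ) : ℝ) = ((b i j : ℕ) : ℝ) := by
        rw [hav]; push_cast; ring
      rw [hxdef] at h2
      rw [h3]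
      exact le_trans h1 h2
  · intro A₁ A₂ hne h1 h2
    rw [hBad, mem_filter, not_and, not_not] at hb
    exact hb (mem_univ _) A₁ A₂ hne h1 h2
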